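/- The edge set of the complete graph K_{10} can be partitioned into 3 subgraphs, each planar and of girth at least 4 (triangle-free). -/

import Mathlib

open SimpleGraph Set

/-- A simple graph is planar if it admits a drawing in the plane: an injective placement of
vertices together with, for each edge, a simple (injective continuous) arc joining its endpoints,
such that arcs pass through no other vertices and two distinct arcs meet only in common
endpoints. -/
def IsPlanar {V : Type*} (G : SimpleGraph V) : Prop :=
  ∃ (pos : V → ℝ × ℝ) (arc : V → V → Set (ℝ × ℝ)),
    Function.Injective pos ∧
    (∀ u v, G.Adj u v →
      ∃ f : ℝ → ℝ × ℝ, ContinuousOn f (Set.Icc 0 1) ∧ Set.InjOn f (Set.Icc 0 1) ∧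
        f 0 = pos u ∧ f 1 = pos v ∧ arc u v = f '' Set.Icc 0 1) ∧
    (∀ u v, arc u v = arc v u) ∧
    (∀ u v, G.Adj u v → ∀ w, pos w ∈ arc u v → w = u ∨ w = v) ∧
    (∀ u v u' v', G.Adj u v → G.Adj u' v' → s(u, v) ≠ s(u', v') →
      arc u v ∩ arc u' v' ⊆ ({pos u, pos v} : Set (ℝ × ℝ)) ∩ {pos u', pos v'})

noncomputable section

private def lf (A B : ℝ) (p : ℝ × ℝ) : ℝ := A * p.1 + B * p.2

private lemma seg_le {A B C : ℝ} {a b : ℝ × ℝ} (ha : lf A B a ≤ C) (hb : lf A B b ≤ C)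
    {x : ℝ × ℝ} (hx : x ∈ segment ℝ a b) : lf A B x ≤ C := by
  obtain ⟨s, t, hs, ht, hst, rfl⟩ := hx
  simp only [lf, Prod.fst_add, Prod.snd_add, Prod.smul_fst, Prod.smul_snd, smul_eq_mul] at *
  have hC : s * C + t * C = C := by rw [← add_mul, hst, one_mul]
  nlinarith [mul_le_mul_of_nonneg_left ha hs, mul_le_mul_of_nonneg_left hb ht, hC]

private lemma seg_lt {A B C : ℝ} {a b : ℝ × ℝ} (ha : lf A B a < C) (hb : lf A B b < C)
    {x : ℝ × ℝ} (hx : x ∈ segment ℝ a b) : lf A B x < C := by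
  obtain ⟨s, t, hs, ht, hst, rfl⟩ := hx
  rcases eq_or_lt_of_le hs with h0 | h0
  · have : t = 1 := by linarith
    simp only [← h0, this, zero_smul, one_smul, zero_add]
    exact hb
  · simp only [lf, Prod.fst_add, Prod.snd_add, Prod.smul_fst, Prod.smul_snd, smul_eq_mul] at *
    have hC : s * C + t * C = C := by rw [← add_mul, hst, one_mul]
    nlinarith [mul_lt_mul_of_pos_left ha h0, mul_le_mul_of_nonneg_left hb.le ht, hC]

private lemma seg_strict {A B : ℝ} {a b : ℝ × ℝ} (h : lf A B b < lf A B a)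
    {x : ℝ × ℝ} (hx : x ∈ segment ℝ a b) : lf A B x < lf A B a ∨ x = a := by
  obtain ⟨s, t, hs, ht, hst, rfl⟩ := hx
  rcases eq_or_lt_of_le ht with h0 | h0
  · right
    have : s = 1 := by linarith
    simp [← h0, this]
  · left
    simp only [lf, Prod.fst_add, Prod.snd_add, Prod.smul_fst, Prod.smul_snd, smul_eq_mul] at *
    have hC : s * (A * a.1 + B * a.2) + t * (A * a.1 + B * a.2) = A * a.1 + B * a.2 := by
      rw [← add_mul, hst, one_mul]
    nlinarith [mul_lt_mul_of_pos_left h h0, hC]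

private lemma shared_pt {A B : ℝ} {p b d : ℝ × ℝ} (h1 : lf A B b < lf A B p)
    (h2 : lf A B p < lf A B d) {x : ℝ × ℝ}
    (hxb : x ∈ segment ℝ p b) (hxd : x ∈ segment ℝ p d) : x = p := by
  rcases seg_strict h1 hxb with h | h
  · rcases seg_strict (A := -A) (B := -B) (a := p) (b := d)
      (by simp only [lf] at *; nlinarith) hxd with h' | h'
    · exfalso; simp only [lf] at *; nlinarith
    · exact h'
  · exact h

/-- not on segment: certificate by nonzero cross product -/
private lemma not_on_seg_cross {a b w : ℝ × ℝ}
    (h : (b.1 - a.1) * (w.2 - a.2) - (b.2 - a.2) * (w.1 - a.1) ≠ 0) :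
    w ∉ segment ℝ a b := by
  intro hw
  have hb : lf (-(b.2 - a.2)) (b.1 - a.1) b ≤ lf (-(b.2 - a.2)) (b.1 - a.1) a :=
    le_of_eq (by simp only [lf]; ring)
  have hb' : lf (b.2 - a.2) (-(b.1 - a.1)) b ≤ lf (b.2 - a.2) (-(b.1 - a.1)) a :=
    le_of_eq (by simp only [lf]; ring)
  have h1 := seg_le (le_refl _) hb hw
  have h2 := seg_le (le_refl _) hb' hw
  apply h
  simp only [lf] at h1 h2
  nlinarith [h1, h2]

/-- not on segment: collinear-or-not but strictly beyond in direction -/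
private lemma not_on_seg_out {a b w : ℝ × ℝ}
    (h1 : (b.1 - a.1) * a.1 + (b.2 - a.2) * a.2 < (b.1 - a.1) * w.1 + (b.2 - a.2) * w.2)
    (h2 : (b.1 - a.1) * b.1 + (b.2 - a.2) * b.2 < (b.1 - a.1) * w.1 + (b.2 - a.2) * w.2) :
    w ∉ segment ℝ a b := by
  intro hw
  have := seg_lt (A := b.1 - a.1) (B := b.2 - a.2)
    (C := (b.1 - a.1) * w.1 + (b.2 - a.2) * w.2) h1 h2 hw
  simp only [lf] at this
  exact lt_irrefl _ this

/-- shared endpoint separation from cross/dot certificate -/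
private lemma shared_sep {p b d : ℝ × ℝ}
    (hc : (b.1 - p.1) * (d.2 - p.2) - (b.2 - p.2) * (d.1 - p.1) ≠ 0 ∨
      (b.1 - p.1) * (d.1 - p.1) + (b.2 - p.2) * (d.2 - p.2) < 0)
    (hdp : d ≠ p) {x : ℝ × ℝ}
    (hxb : x ∈ segment ℝ p b) (hxd : x ∈ segment ℝ p d) : x = p := by
  rcases hc with hc | hdot
  · rcases hc.lt_or_gt with hneg | hposi
    · refine shared_pt (A := (b.2 - p.2) + (d.2 - p.2)) (B := -((b.1 - p.1) + (d.1 - p.1)))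
        ?_ ?_ hxb hxd <;> (simp only [lf]; nlinarith)
    · refine shared_pt (A := -((b.2 - p.2) + (d.2 - p.2))) (B := (b.1 - p.1) + (d.1 - p.1))
        ?_ ?_ hxb hxd <;> (simp only [lf]; nlinarith)
  · have hsq : 0 < (d.1 - p.1) ^ 2 + (d.2 - p.2) ^ 2 := by
      have h0 : d.1 - p.1 ≠ 0 ∨ d.2 - p.2 ≠ 0 := by
        by_contra hcon
        push_neg at hcon
        exact hdp (Prod.ext (sub_eq_zero.mp hcon.1) (sub_eq_zero.mp hcon.2))
      rcases h0 with h | h <;> positivity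
    refine shared_pt (A := d.1 - p.1) (B := d.2 - p.2) ?_ ?_ hxb hxd <;>
      (simp only [lf]; nlinarith)

end

noncomputable section

private def posQ (q : Fin 10 → ℤ × ℤ) (i : Fin 10) : ℝ × ℝ := (((q i).1 : ℝ), ((q i).2 : ℝ))

private lemma isPlanar_of_data (G : SimpleGraph (Fin 10))
    (adj : Fin 10 → Fin 10 → Bool)
    (q : Fin 10 → ℤ × ℤ)
    (edges : List (Fin 10 × Fin 10))
    (sDL : List ((Fin 10 × Fin 10) × (Fin 10 × Fin 10) × ℤ × ℤ × ℤ))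
    (hG : ∀ u v, G.Adj u v ↔ adj u v = true)
    (hsym : ∀ u v, adj u v = adj v u)
    (hinj : ∀ i j, q i = q j → i = j)
    (hned : ∀ u v, adj u v = true → u ≠ v)
    (hmem : ∀ u v, adj u v = true → (u, v) ∈ edges ∨ (v, u) ∈ edges)
    (hedge : ∀ e ∈ edges, adj e.1 e.2 = true)
    (hVc : ∀ e ∈ edges, ∀ w : Fin 10, w ≠ e.1 → w ≠ e.2 →
      (((q e.2).1 - (q e.1).1) * ((q w).2 - (q e.1).2) -
        ((q e.2).2 - (q e.1).2) * ((q w).1 - (q e.1).1) ≠ 0 ∨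
      (((q e.2).1 - (q e.1).1) * (q e.1).1 + ((q e.2).2 - (q e.1).2) * (q e.1).2 <
          ((q e.2).1 - (q e.1).1) * (q w).1 + ((q e.2).2 - (q e.1).2) * (q w).2 ∧
        ((q e.2).1 - (q e.1).1) * (q e.2).1 + ((q e.2).2 - (q e.1).2) * (q e.2).2 <
          ((q e.2).1 - (q e.1).1) * (q w).1 + ((q e.2).2 - (q e.1).2) * (q w).2) ∨
      (((q e.2).1 - (q e.1).1) * (q w).1 + ((q e.2).2 - (q e.1).2) * (q w).2 <
          ((q e.2).1 - (q e.1).1) * (q e.1).1 + ((q e.2).2 - (q e.1).2) * (q e.1).2 ∧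
        ((q e.2).1 - (q e.1).1) * (q w).1 + ((q e.2).2 - (q e.1).2) * (q w).2 <
          ((q e.2).1 - (q e.1).1) * (q e.2).1 + ((q e.2).2 - (q e.1).2) * (q e.2).2)))
    (hSc : ∀ p b d : Fin 10, adj p b = true → adj p d = true → b ≠ d →
      (((q b).1 - (q p).1) * ((q d).2 - (q p).2) -
        ((q b).2 - (q p).2) * ((q d).1 - (q p).1) ≠ 0 ∨
       ((q b).1 - (q p).1) * ((q d).1 - (q p).1) +
        ((q b).2 - (q p).2) * ((q d).2 - (q p).2) < 0))
    (hDl : ∀ t ∈ sDL,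
      t.2.2.1 * (q t.1.1).1 + t.2.2.2.1 * (q t.1.1).2 < t.2.2.2.2 ∧
      t.2.2.1 * (q t.1.2).1 + t.2.2.2.1 * (q t.1.2).2 < t.2.2.2.2 ∧
      t.2.2.2.2 < t.2.2.1 * (q t.2.1.1).1 + t.2.2.2.1 * (q t.2.1.1).2 ∧
      t.2.2.2.2 < t.2.2.1 * (q t.2.1.2).1 + t.2.2.2.1 * (q t.2.1.2).2)
    (hDcov : ∀ e ∈ edges, ∀ e' ∈ edges,
      e.1 ≠ e'.1 → e.1 ≠ e'.2 → e.2 ≠ e'.1 → e.2 ≠ e'.2 →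
      ∃ t ∈ sDL, (t.1 = e ∧ t.2.1 = e') ∨ (t.1 = e' ∧ t.2.1 = e)) :
    IsPlanar G := by
  classical
  set pos : Fin 10 → ℝ × ℝ := posQ q with hpos
  have hposinj : Function.Injective pos := by
    intro i j h
    apply hinj
    have h1 : ((q i).1 : ℝ) = ((q j).1 : ℝ) := congrArg Prod.fst h
    have h2 : ((q i).2 : ℝ) = ((q j).2 : ℝ) := congrArg Prod.snd h
    exact Prod.ext (by exact_mod_cast h1) (by exact_mod_cast h2)
  have keyV : ∀ e ∈ edges, ∀ w : Fin 10, w ≠ e.1 → w ≠ e.2 →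
      pos w ∉ segment ℝ (pos e.1) (pos e.2) := by
    intro e he w hw1 hw2
    rcases hVc e he w hw1 hw2 with hc | hbig | hsmall
    · apply not_on_seg_cross
      simp only [pos, posQ]
      intro hcon
      apply hc
      exact_mod_cast hcon
    · refine not_on_seg_out ?_ ?_
      · simp only [pos, posQ]; exact_mod_cast hbig.1
      · simp only [pos, posQ]; exact_mod_cast hbig.2
    · intro hw
      rw [segment_symm] at hw
      refine not_on_seg_out ?_ ?_ hw
      · simp only [pos, posQ]
        have hi : ((q e.1).1 - (q e.2).1) * (q e.2).1 + ((q e.1).2 - (q e.2).2) * (q e.2).2 <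
            ((q e.1).1 - (q e.2).1) * (q w).1 + ((q e.1).2 - (q e.2).2) * (q w).2 := by
          nlinarith [hsmall.2]
        exact_mod_cast hi
      · simp only [pos, posQ]
        have hi : ((q e.1).1 - (q e.2).1) * (q e.1).1 + ((q e.1).2 - (q e.2).2) * (q e.1).2 <
            ((q e.1).1 - (q e.2).1) * (q w).1 + ((q e.1).2 - (q e.2).2) * (q w).2 := by
          nlinarith [hsmall.1]
        exact_mod_cast hi
  have keyS : ∀ p b d : Fin 10, adj p b = true → adj p d = true → b ≠ d →
      ∀ x : ℝ × ℝ, x ∈ segment ℝ (pos p) (pos b) → x ∈ segment ℝ (pos p) (pos d) → x = pos p := by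
    intro p b d h1 h2 hbd x hx1 hx2
    have hdp : pos d ≠ pos p := fun hc => (hned p d h2) (hinj _ _ (by
      have e1 : ((q d).1 : ℝ) = ((q p).1 : ℝ) := congrArg Prod.fst hc
      have e2 : ((q d).2 : ℝ) = ((q p).2 : ℝ) := congrArg Prod.snd hc
      exact Prod.ext (by exact_mod_cast e1) (by exact_mod_cast e2))).symm
    refine shared_sep ?_ hdp hx1 hx2
    rcases hSc p b d h1 h2 hbd with hc | hd
    · left
      simp only [pos, posQ]
      intro hcon
      apply hc
      exact_mod_cast hcon
    · right
      simp only [pos, posQ]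
      exact_mod_cast hd
  have keyD : ∀ e ∈ edges, ∀ e' ∈ edges,
      e.1 ≠ e'.1 → e.1 ≠ e'.2 → e.2 ≠ e'.1 → e.2 ≠ e'.2 →
      ∀ x : ℝ × ℝ, x ∈ segment ℝ (pos e.1) (pos e.2) →
        x ∈ segment ℝ (pos e'.1) (pos e'.2) → False := by
    intro e he e' he' h1 h2 h3 h4 x hx1 hx2
    obtain ⟨t, ht, hor⟩ := hDcov e he e' he' h1 h2 h3 h4
    have hd := hDl t ht
    have key : ∀ a₁ a₂ b₁ b₂ : Fin 10,
        t.2.2.1 * (q a₁).1 + t.2.2.2.1 * (q a₁).2 < t.2.2.2.2 →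
        t.2.2.1 * (q a₂).1 + t.2.2.2.1 * (q a₂).2 < t.2.2.2.2 →
        t.2.2.2.2 < t.2.2.1 * (q b₁).1 + t.2.2.2.1 * (q b₁).2 →
        t.2.2.2.2 < t.2.2.1 * (q b₂).1 + t.2.2.2.1 * (q b₂).2 →
        x ∈ segment ℝ (pos a₁) (pos a₂) → x ∈ segment ℝ (pos b₁) (pos b₂) → False := by
      intro a₁ a₂ b₁ b₂ i1 i2 i3 i4 hs1 hs2
      have l1 : lf ((t.2.2.1 : ℤ) : ℝ) ((t.2.2.2.1 : ℤ) : ℝ) x < ((t.2.2.2.2 : ℤ) : ℝ) := by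
        refine seg_lt ?_ ?_ hs1
        · simp only [lf, pos, posQ]; exact_mod_cast i1
        · simp only [lf, pos, posQ]; exact_mod_cast i2
      have l2 : lf (-((t.2.2.1 : ℤ) : ℝ)) (-((t.2.2.2.1 : ℤ) : ℝ)) x < -((t.2.2.2.2 : ℤ) : ℝ) := by
        refine seg_lt ?_ ?_ hs2
        · simp only [lf, pos, posQ]
          have : ((t.2.2.2.2 : ℤ) : ℝ) < (t.2.2.1 : ℤ) * ((q b₁).1 : ℤ) + (t.2.2.2.1 : ℤ) * ((q b₁).2 : ℤ) := by
            exact_mod_cast i3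
          push_cast at this ⊢
          linarith
        · simp only [lf, pos, posQ]
          have : ((t.2.2.2.2 : ℤ) : ℝ) < (t.2.2.1 : ℤ) * ((q b₂).1 : ℤ) + (t.2.2.2.1 : ℤ) * ((q b₂).2 : ℤ) := by
            exact_mod_cast i4
          push_cast at this ⊢
          linarith
      simp only [lf] at l1 l2
      linarith
    rcases hor with ⟨ha, hb⟩ | ⟨ha, hb⟩
    · rw [ha, hb] at hd
      exact key e.1 e.2 e'.1 e'.2 hd.1 hd.2.1 hd.2.2.1 hd.2.2.2 hx1 hx2
    · rw [ha, hb] at hd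
      exact key e'.1 e'.2 e.1 e.2 hd.1 hd.2.1 hd.2.2.1 hd.2.2.2 hx2 hx1
  -- the normalized pairwise statement
  have main : ∀ e ∈ edges, ∀ e' ∈ edges, s(e.1, e.2) ≠ s(e'.1, e'.2) →
      segment ℝ (pos e.1) (pos e.2) ∩ segment ℝ (pos e'.1) (pos e'.2) ⊆
        ({pos e.1, pos e.2} : Set (ℝ × ℝ)) ∩ {pos e'.1, pos e'.2} := by
    intro e he e' he' hsne x hx
    obtain ⟨hx1, hx2⟩ := hx
    have hadj : adj e.1 e.2 = true := hedge e he
    have hadj' : adj e'.1 e'.2 = true := hedge e' he'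
    by_cases h1 : e.1 = e'.1
    · have hvd : e.2 ≠ e'.2 := fun hv => hsne (by rw [h1, hv])
      have had : adj e.1 e'.2 = true := by rw [h1]; exact hadj'
      have hx2' : x ∈ segment ℝ (pos e.1) (pos e'.2) := by rwa [h1]
      have hxp := keyS e.1 e.2 e'.2 hadj had hvd x hx1 hx2'
      exact ⟨by rw [hxp]; exact Or.inl rfl, by rw [hxp, h1]; exact Or.inl rfl⟩
    by_cases h2 : e.1 = e'.2
    · have hvd : e.2 ≠ e'.1 := fun hv => hsne (by rw [h2, hv, Sym2.eq_swap])
      have had : adj e.1 e'.1 = true := by rw [h2, hsym]; exact hadj'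
      have hx2' : x ∈ segment ℝ (pos e.1) (pos e'.1) := by
        rw [segment_symm] at hx2; rwa [h2]
      have hxp := keyS e.1 e.2 e'.1 hadj had hvd x hx1 hx2'
      exact ⟨by rw [hxp]; exact Or.inl rfl, by rw [hxp, h2]; exact Or.inr rfl⟩
    by_cases h3 : e.2 = e'.1
    · have hvd : e.1 ≠ e'.2 := h2
      have hab : adj e.2 e.1 = true := by rw [hsym] at hadj; exact hadj
      have had : adj e.2 e'.2 = true := by rw [h3]; exact hadj'
      have hx1' : x ∈ segment ℝ (pos e.2) (pos e.1) := by rwa [segment_symm] at hx1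
      have hx2' : x ∈ segment ℝ (pos e.2) (pos e'.2) := by rwa [h3]
      have hxp := keyS e.2 e.1 e'.2 hab had hvd x hx1' hx2'
      exact ⟨by rw [hxp]; exact Or.inr rfl, by rw [hxp, h3]; exact Or.inl rfl⟩
    by_cases h4 : e.2 = e'.2
    · have hvd : e.1 ≠ e'.1 := h1
      have hab : adj e.2 e.1 = true := by rw [hsym] at hadj; exact hadj
      have had : adj e.2 e'.1 = true := by rw [h4, hsym]; exact hadj'
      have hx1' : x ∈ segment ℝ (pos e.2) (pos e.1) := by rwa [segment_symm] at hx1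
      have hx2' : x ∈ segment ℝ (pos e.2) (pos e'.1) := by
        rw [segment_symm] at hx2; rwa [h4]
      have hxp := keyS e.2 e.1 e'.1 hab had hvd x hx1' hx2'
      exact ⟨by rw [hxp]; exact Or.inr rfl, by rw [hxp, h4]; exact Or.inr rfl⟩
    · exact absurd (keyD e he e' he' h1 h2 h3 h4 x hx1 hx2) (by simp)
  refine ⟨pos, fun u v => segment ℝ (pos u) (pos v), hposinj, ?_, ?_, ?_, ?_⟩
  · intro u v huv
    have hne : pos u ≠ pos v := fun h => (G.ne_of_adj huv) (hposinj h)
    refine ⟨fun θ => pos u + θ • (pos v - pos u), ?_, ?_, by simp, by simp,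
      (segment_eq_image' ℝ (pos u) (pos v))⟩
    · exact (continuous_const.add (continuous_id.smul continuous_const)).continuousOn
    · intro s _ t _ h
      have hc : s • (pos v - pos u) = t • (pos v - pos u) := add_left_cancel h
      have h' : (s - t) • (pos v - pos u) = 0 := by
        rw [sub_smul, hc, sub_self]
      rcases smul_eq_zero.mp h' with h'' | h''
      · exact sub_eq_zero.mp h''
      · exact absurd (sub_eq_zero.mp h'') (Ne.symm hne)
  · intro u v; exact segment_symm ℝ _ _
  · intro u v huv w hw
    have hw' : pos w ∈ segment ℝ (pos u) (pos v) := hw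
    clear hw
    by_cases h1 : w = u
    · exact Or.inl h1
    by_cases h2 : w = v
    · exact Or.inr h2
    have hadj := (hG u v).mp huv
    exfalso
    rcases hmem u v hadj with he | he
    · exact keyV (u, v) he w h1 h2 hw'
    · rw [segment_symm] at hw'
      exact keyV (v, u) he w h2 h1 hw'
  · intro u v u' v' huv hu'v' hs
    have a1 := (hG u v).mp huv
    have a2 := (hG u' v').mp hu'v'
    show segment ℝ (pos u) (pos v) ∩ segment ℝ (pos u') (pos v') ⊆
      ({pos u, pos v} : Set (ℝ × ℝ)) ∩ {pos u', pos v'}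
    rcases hmem u v a1 with he | he <;> rcases hmem u' v' a2 with he' | he'
    · exact main (u, v) he (u', v') he' hs
    · rw [show segment ℝ (pos u') (pos v') = segment ℝ (pos v') (pos u') from segment_symm ℝ _ _,
        Set.pair_comm (pos u') (pos v')]
      exact main (u, v) he (v', u') he' (fun h => hs (h.trans Sym2.eq_swap))
    · rw [show segment ℝ (pos u) (pos v) = segment ℝ (pos v) (pos u) from segment_symm ℝ _ _,
        Set.pair_comm (pos u) (pos v)]
      exact main (v, u) he (u', v') he' (fun h => hs (Sym2.eq_swap.trans h))
    · rw [show segment ℝ (pos u) (pos v) = segment ℝ (pos v) (pos u) from segment_symm ℝ _ _,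
        Set.pair_comm (pos u) (pos v),
        show segment ℝ (pos u') (pos v') = segment ℝ (pos v') (pos u') from segment_symm ℝ _ _,
        Set.pair_comm (pos u') (pos v')]
      exact main (v, u) he (v', u') he' (fun h => hs ((Sym2.eq_swap.trans h).trans Sym2.eq_swap))

end

noncomputable section

private lemma egirth_ge_four (G : SimpleGraph (Fin 10))
    (h : ∀ a b c : Fin 10, G.Adj a b → G.Adj b c → G.Adj c a → False) : 4 ≤ G.egirth := by
  rw [SimpleGraph.le_egirth]
  intro a w hw
  have h3 := hw.three_le_length
  have hne3 : w.length ≠ 3 := by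
    intro hlen
    cases w with
    | nil => simp at hlen
    | cons h1 p =>
      cases p with
      | nil => simp at hlen
      | cons h2 q =>
        cases q with
        | nil => simp at hlen
        | cons h4 r =>
          cases r with
          | nil => exact h _ _ _ h1 h2 h4
          | cons h5 t => simp [SimpleGraph.Walk.length_cons] at hlen
  have h4 : 4 ≤ w.length := by omega
  exact_mod_cast h4

end
set_option maxRecDepth 100000
set_option maxHeartbeats 1000000
private def e1 : List (Fin 10 × Fin 10) := [(0,5), (0,6), (0,7), (0,8), (0,9), (1,5), (1,6), (1,7), (1,8), (1,9), (2,5), (2,6), (3,6), (3,7), (4,7), (4,8)]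
private def adj1 : Fin 10 → Fin 10 → Bool := fun u v => decide ((u, v) ∈ e1) || decide ((v, u) ∈ e1)
private def q1 : Fin 10 → ℤ × ℤ := ![(0, 50), (0, -50), (-14, 2), (-4, 2), (6, 2), (-20, 0), (-10, 0), (0, 0), (10, 0), (20, 0)]
private def sD1 : List ((Fin 10 × Fin 10) × (Fin 10 × Fin 10) × ℤ × ℤ × ℤ) := [
  ((0,5), (1,6), 5, -2, -75),
  ((0,5), (1,7), 5, -2, -50),
  ((0,5), (1,8), 5, -2, -25),
  ((0,5), (1,9), 5, -2, 0),
  ((0,5), (2,6), 5, -2, -87),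
  ((0,5), (3,6), 5, -2, -75),
  ((0,5), (3,7), 5, -2, -62),
  ((0,5), (4,7), 5, -2, -50),
  ((0,5), (4,8), 5, -2, -37),
  ((0,6), (1,5), -5, -2, 75),
  ((0,6), (1,7), 5, -1, -25),
  ((0,6), (1,8), 5, -1, 0),
  ((0,6), (1,9), 5, -2, 25),
  ((0,6), (2,5), -5, 1, 61),
  ((0,6), (3,7), 5, -1, -36),
  ((0,6), (4,7), 5, -1, -25),
  ((0,6), (4,8), 5, -1, -11),
  ((0,7), (1,5), -5, -2, 50),
  ((0,7), (1,6), -5, -1, 25),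
  ((0,7), (1,8), 5, -1, 25),
  ((0,7), (1,9), 5, -2, 50),
  ((0,7), (2,5), -1, 0, 7),
  ((0,7), (2,6), -1, 0, 5),
  ((0,7), (3,6), -1, 0, 2),
  ((0,7), (4,8), 1, 0, 3),
  ((0,8), (1,5), -5, -2, 25),
  ((0,8), (1,6), -5, -1, 0),
  ((0,8), (1,7), -5, -1, -25),
  ((0,8), (1,9), 5, -2, 75),
  ((0,8), (2,5), -5, -1, 9),
  ((0,8), (2,6), -5, -1, 0),
  ((0,8), (3,6), -5, -1, -16),
  ((0,8), (3,7), -5, -1, -25),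
  ((0,8), (4,7), -5, -1, -41),
  ((0,9), (1,5), -5, -2, 0),
  ((0,9), (1,6), -5, -2, -25),
  ((0,9), (1,7), -5, -2, -50),
  ((0,9), (1,8), -5, -2, -75),
  ((0,9), (2,5), -5, -2, -17),
  ((0,9), (2,6), -5, -2, -25),
  ((0,9), (3,6), -5, -2, -42),
  ((0,9), (3,7), -5, -2, -50),
  ((0,9), (4,7), -5, -2, -67),
  ((0,9), (4,8), -5, -2, -75),
  ((1,5), (2,6), 5, 2, -83),
  ((1,5), (3,6), 5, 2, -75),
  ((1,5), (3,7), 5, 2, -58),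
  ((1,5), (4,7), 5, 2, -50),
  ((1,5), (4,8), 5, 2, -33),
  ((1,6), (2,5), -2, 1, 25),
  ((1,6), (3,7), 3, 1, -20),
  ((1,6), (4,7), 5, 1, -25),
  ((1,6), (4,8), 5, 1, -9),
  ((1,7), (2,5), -7, 1, 50),
  ((1,7), (2,6), -1, 0, 5),
  ((1,7), (3,6), -2, 1, 5),
  ((1,7), (4,8), 3, 1, 10),
  ((1,8), (2,5), -5, 1, 11),
  ((1,8), (2,6), -5, 1, 0),
  ((1,8), (3,6), -5, 1, -14),
  ((1,8), (3,7), -5, 1, -25),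
  ((1,8), (4,7), -2, 1, -15),
  ((1,9), (2,5), -5, 2, -13),
  ((1,9), (2,6), -5, 2, -25),
  ((1,9), (3,6), -5, 2, -38),
  ((1,9), (3,7), -5, 2, -50),
  ((1,9), (4,7), -5, 2, -63),
  ((1,9), (4,8), -5, 2, -75),
  ((2,5), (3,6), 2, -1, -25),
  ((2,5), (3,7), 1, 0, -9),
  ((2,5), (4,7), 7, -1, -50),
  ((2,5), (4,8), 1, 0, -4),
  ((2,6), (3,7), 3, 1, -20),
  ((2,6), (4,7), 1, 0, -5),
  ((2,6), (4,8), 8, 1, -15),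
  ((3,6), (4,7), 2, -1, -5),
  ((3,6), (4,8), 1, 0, 1),
  ((3,7), (4,8), 3, 1, 10)
]

private def Gr1 : SimpleGraph (Fin 10) :=
  { Adj := fun u v => adj1 u v = true
    symm := ⟨fun u v h => (by decide : ∀ u v : Fin 10, adj1 u v = true → adj1 v u = true) u v h⟩
    loopless := ⟨fun u h => absurd h ((by decide : ∀ u : Fin 10, ¬ adj1 u u = true) u)⟩ }

private lemma planar1 : IsPlanar Gr1 :=
  isPlanar_of_data Gr1 adj1 q1 e1 sD1 (fun _ _ => Iff.rfl)
    (by decide) (by decide) (by decide) (by decide) (by decide)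
    (by decide) (by decide) (by decide) (by decide)

private lemma girth1 : 4 ≤ Gr1.egirth :=
  egirth_ge_four Gr1 (fun a b c h1 h2 h3 =>
    (by decide : ∀ a b c : Fin 10, adj1 a b = true → adj1 b c = true → adj1 c a = true → False) a b c h1 h2 h3)

private def e2 : List (Fin 10 × Fin 10) := [(0,1), (1,2), (2,3), (3,4), (0,4), (5,6), (6,7), (7,8), (8,9), (5,9), (2,7), (2,9), (3,5), (4,6)]
private def adj2 : Fin 10 → Fin 10 → Bool := fun u v => decide ((u, v) ∈ e2) || decide ((v, u) ∈ e2)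
private def q2 : Fin 10 → ℤ × ℤ := ![(0, 100), (-95, 31), (-59, -81), (59, -81), (95, 31), (15, -26), (30, 5), (-28, -10), (-21, -21), (-10, -28)]
private def sD2 : List ((Fin 10 × Fin 10) × (Fin 10 × Fin 10) × ℤ × ℤ × ℤ) := [
  ((0,1), (2,3), 9, -28, 7),
  ((0,1), (3,4), 95, -69, -7),
  ((0,1), (5,6), 138, -190, -7905),
  ((0,1), (6,7), 69, -95, -5241),
  ((0,1), (7,8), 69, -95, -5241),
  ((0,1), (8,9), 69, -95, -4477),
  ((0,1), (5,9), 69, -95, -3765),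
  ((0,1), (2,7), 69, -95, -5241),
  ((0,1), (2,9), 69, -95, -3765),
  ((0,1), (3,5), 138, -190, -5995),
  ((0,1), (4,6), 138, -190, -7905),
  ((1,2), (3,4), 1, 0, 0),
  ((1,2), (0,4), 95, 69, 7),
  ((1,2), (5,6), 56, 18, -2195),
  ((1,2), (6,7), 56, 18, -3255),
  ((1,2), (7,8), 56, 18, -3255),
  ((1,2), (8,9), 28, 9, -1579),
  ((1,2), (5,9), 56, 18, -2913),
  ((1,2), (3,5), 56, 18, -2195),
  ((1,2), (4,6), 28, 9, -748),
  ((2,3), (0,4), 9, 28, -7),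
  ((2,3), (5,6), 0, 2, -107),
  ((2,3), (6,7), 0, 2, -91),
  ((2,3), (7,8), 0, 1, -51),
  ((2,3), (8,9), 0, 2, -109),
  ((2,3), (5,9), 0, 2, -109),
  ((2,3), (4,6), 0, 1, -38),
  ((3,4), (5,6), -28, 9, -1588),
  ((3,4), (6,7), -28, 9, -1588),
  ((3,4), (7,8), -28, 9, -991),
  ((3,4), (8,9), -56, 18, -2353),
  ((3,4), (5,9), -56, 18, -3035),
  ((3,4), (2,7), -56, 18, -1687),
  ((3,4), (2,9), -56, 18, -2353),
  ((0,4), (5,6), -138, -190, -12045),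
  ((0,4), (6,7), -138, -190, -12045),
  ((0,4), (7,8), -69, -95, -3309),
  ((0,4), (8,9), -69, -95, -3075),
  ((0,4), (5,9), -138, -190, -8065),
  ((0,4), (2,7), -69, -95, -3309),
  ((0,4), (2,9), -69, -95, -3075),
  ((0,4), (3,5), -138, -190, -8065),
  ((5,6), (7,8), -72, 10, -19),
  ((5,6), (8,9), -50, -4, -17),
  ((5,6), (2,7), -86, 32, -17),
  ((5,6), (2,9), -50, -4, -17),
  ((6,7), (8,9), 30, -116, 1063),
  ((6,7), (5,9), 15, -58, 817),
  ((6,7), (2,9), 15, -58, 817),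
  ((6,7), (3,5), 30, -116, 1893),
  ((7,8), (5,9), 11, -7, 1),
  ((7,8), (2,9), 53, -49, 379),
  ((7,8), (3,5), 72, -10, 19),
  ((7,8), (4,6), 102, 52, 43),
  ((8,9), (2,7), -71, 31, 1259),
  ((8,9), (3,5), 50, 4, 17),
  ((8,9), (4,6), 80, 66, 41),
  ((5,9), (2,7), -71, 31, 760),
  ((5,9), (4,6), 15, 31, 12),
  ((2,7), (3,5), 86, -32, 17),
  ((2,7), (4,6), 116, 30, 41),
  ((2,9), (3,5), 50, 4, 17),
  ((2,9), (4,6), 80, 66, 41),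
  ((3,5), (4,6), 15, 31, 12)
]

private def Gr2 : SimpleGraph (Fin 10) :=
  { Adj := fun u v => adj2 u v = true
    symm := ⟨fun u v h => (by decide : ∀ u v : Fin 10, adj2 u v = true → adj2 v u = true) u v h⟩
    loopless := ⟨fun u h => absurd h ((by decide : ∀ u : Fin 10, ¬ adj2 u u = true) u)⟩ }

private lemma planar2 : IsPlanar Gr2 :=
  isPlanar_of_data Gr2 adj2 q2 e2 sD2 (fun _ _ => Iff.rfl)
    (by decide) (by decide) (by decide) (by decide) (by decide)
    (by decide) (by decide) (by decide) (by decide)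

private lemma girth2 : 4 ≤ Gr2.egirth :=
  egirth_ge_four Gr2 (fun a b c h1 h2 h3 =>
    (by decide : ∀ a b c : Fin 10, adj2 a b = true → adj2 b c = true → adj2 c a = true → False) a b c h1 h2 h3)

private def e3 : List (Fin 10 × Fin 10) := [(0,2), (2,4), (1,4), (1,3), (0,3), (5,7), (7,9), (6,9), (6,8), (5,8), (2,8), (3,8), (3,9), (4,5), (4,9)]
private def adj3 : Fin 10 → Fin 10 → Bool := fun u v => decide ((u, v) ∈ e3) || decide ((v, u) ∈ e3)
private def q3 : Fin 10 → ℤ × ℤ := ![(0, 100), (26, -97), (-87, 50), (77, -64), (-34, -94), (-6, -14), (14, -5), (0, -15), (9, 12), (6, -14)]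
private def sD3 : List ((Fin 10 × Fin 10) × (Fin 10 × Fin 10) × ℤ × ℤ × ℤ) := [
  ((0,2), (1,4), 106, -288, -77),
  ((0,2), (1,3), 50, -87, 359),
  ((0,2), (5,7), 50, -87, -3891),
  ((0,2), (7,9), 100, -174, -7395),
  ((0,2), (6,9), 100, -174, -7565),
  ((0,2), (6,8), 50, -87, -4647),
  ((0,2), (5,8), 50, -87, -4647),
  ((0,2), (3,8), 50, -87, -4647),
  ((0,2), (3,9), 50, -87, -3591),
  ((0,2), (4,5), 50, -87, -3891),
  ((0,2), (4,9), 50, -87, -3591),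
  ((2,4), (1,3), 40, -2, 31),
  ((2,4), (0,3), 164, 77, -1359),
  ((2,4), (5,7), 144, 53, -5742),
  ((2,4), (7,9), 288, 106, -10673),
  ((2,4), (6,9), 144, 53, -4878),
  ((2,4), (6,8), 288, 106, -8127),
  ((2,4), (5,8), 144, 53, -5742),
  ((2,4), (3,8), 144, 53, -3973),
  ((2,4), (3,9), 144, 53, -4878),
  ((1,4), (0,3), 17, 11, -10),
  ((1,4), (5,7), 1, 20, -1107),
  ((1,4), (7,9), 1, 20, -1107),
  ((1,4), (6,9), 1, 20, -1094),
  ((1,4), (6,8), 1, 20, -1000),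
  ((1,4), (5,8), 1, 20, -1100),
  ((1,4), (2,8), 2, 40, -1665),
  ((1,4), (3,8), 19, 17, -390),
  ((1,4), (3,9), 100, 142, -6281),
  ((1,3), (5,7), -11, 17, -1095),
  ((1,3), (7,9), -22, 34, -2239),
  ((1,3), (6,9), -22, 34, -2239),
  ((1,3), (6,8), -11, 17, -1087),
  ((1,3), (5,8), -22, 34, -2107),
  ((1,3), (2,8), -11, 17, -915),
  ((1,3), (4,5), -40, 14, -1177),
  ((1,3), (4,9), -4, 2, -175),
  ((0,3), (5,7), -328, -154, -6545),
  ((0,3), (7,9), -164, -77, -3803),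
  ((0,3), (6,9), -328, -154, -9611),
  ((0,3), (6,8), -164, -77, -5050),
  ((0,3), (5,8), -164, -77, -5050),
  ((0,3), (2,8), -164, -77, -5050),
  ((0,3), (4,5), -164, -77, -2819),
  ((0,3), (4,9), -164, -77, -3803),
  ((5,7), (6,9), 12, 2, 7),
  ((5,7), (6,8), 7, 5, -1),
  ((5,7), (2,8), 1, 3, 0),
  ((5,7), (3,8), 19, 17, 60),
  ((5,7), (3,9), 12, 2, 7),
  ((5,7), (4,9), 4, -2, 41),
  ((7,9), (6,8), 16, 18, -11),
  ((7,9), (5,8), -52, 30, -279),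
  ((7,9), (2,8), 6, 52, -7),
  ((7,9), (3,8), 38, 34, 251),
  ((7,9), (4,5), -12, 2, 7),
  ((6,9), (5,8), -26, 15, -210),
  ((6,9), (2,8), -5, 17, 2),
  ((6,9), (3,8), 19, 17, 278),
  ((6,9), (4,5), -1, 0, 0),
  ((6,8), (3,9), -100, -142, 349),
  ((6,8), (4,5), -40, -18, 11),
  ((6,8), (4,9), -16, -18, 11),
  ((5,8), (3,9), 26, -15, 210),
  ((5,8), (4,9), 26, -15, 210),
  ((2,8), (3,9), -6, -52, 7),
  ((2,8), (4,5), -38, -96, 39),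
  ((2,8), (4,9), -6, -52, 7),
  ((3,8), (4,5), -38, -34, -23),
  ((3,8), (4,9), -38, -34, -251),
  ((3,9), (4,5), -1, 0, 0)
]

private def Gr3 : SimpleGraph (Fin 10) :=
  { Adj := fun u v => adj3 u v = true
    symm := ⟨fun u v h => (by decide : ∀ u v : Fin 10, adj3 u v = true → adj3 v u = true) u v h⟩
    loopless := ⟨fun u h => absurd h ((by decide : ∀ u : Fin 10, ¬ adj3 u u = true) u)⟩ }

private lemma planar3 : IsPlanar Gr3 :=
  isPlanar_of_data Gr3 adj3 q3 e3 sD3 (fun _ _ => Iff.rfl)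
    (by decide) (by decide) (by decide) (by decide) (by decide)
    (by decide) (by decide) (by decide) (by decide)

private lemma girth3 : 4 ≤ Gr3.egirth :=
  egirth_ge_four Gr3 (fun a b c h1 h2 h3 =>
    (by decide : ∀ a b c : Fin 10, adj3 a b = true → adj3 b c = true → adj3 c a = true → False) a b c h1 h2 h3)


private lemma disj_helper (G G' : SimpleGraph (Fin 10))
    (h : ∀ a b : Fin 10, G.Adj a b → G'.Adj a b → False) :
    Disjoint G.edgeSet G'.edgeSet := by
  rw [Set.disjoint_left]
  intro e
  refine Sym2.ind (fun a b => ?_) e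
  simp only [SimpleGraph.mem_edgeSet]
  exact h a b


/-- The edge set of `K₁₀` can be partitioned into 3 subgraphs, each planar with girth at least
four. -/
theorem decomposition_K10 :
    ∃ f : Fin 3 → SimpleGraph (Fin 10),
      (∀ i, IsPlanar (f i) ∧ 4 ≤ (f i).egirth) ∧
      (∀ i j, i ≠ j → Disjoint (f i).edgeSet (f j).edgeSet) ∧
      (⨆ i, f i) = ⊤ := by
  have d12 : Disjoint Gr1.edgeSet Gr2.edgeSet := disj_helper _ _ (fun a b h1 h2 =>
    (by decide : ∀ a b : Fin 10, ¬(adj1 a b = true ∧ adj2 a b = true)) a b ⟨h1, h2⟩)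
  have d13 : Disjoint Gr1.edgeSet Gr3.edgeSet := disj_helper _ _ (fun a b h1 h2 =>
    (by decide : ∀ a b : Fin 10, ¬(adj1 a b = true ∧ adj3 a b = true)) a b ⟨h1, h2⟩)
  have d23 : Disjoint Gr2.edgeSet Gr3.edgeSet := disj_helper _ _ (fun a b h1 h2 =>
    (by decide : ∀ a b : Fin 10, ¬(adj2 a b = true ∧ adj3 a b = true)) a b ⟨h1, h2⟩)
  refine ⟨![Gr1, Gr2, Gr3], ?_, ?_, ?_⟩
  · intro i
    fin_cases i
    · exact ⟨planar1, girth1⟩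
    · exact ⟨planar2, girth2⟩
    · exact ⟨planar3, girth3⟩
  · intro i j hij
    fin_cases i <;> fin_cases j <;>
      first
        | exact absurd rfl hij
        | exact d12
        | exact d13
        | exact d23
        | exact d12.symm
        | exact d13.symm
        | exact d23.symm
  · rw [eq_top_iff]
    intro u v huv
    rw [SimpleGraph.iSup_adj]
    have hne : u ≠ v := (SimpleGraph.top_adj u v).mp huv
    rcases (by decide : ∀ u v : Fin 10, u ≠ v →
        adj1 u v = true ∨ adj2 u v = true ∨ adj3 u v = true) u v hne with h | h | h
    · exact ⟨0, h⟩
    · exact ⟨1, h⟩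
    · exact ⟨2, h⟩
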